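/- For u ∈ H¹(ℝ,ℂ²) and δ > 0, the Riemann sum of ‖u‖² over the lattice δℤ satisfies δ Σ_{x ∈ δℤ} ‖u(x)‖²_{ℂ²} ≤ ‖u‖²_{L²} + 2δ ‖u‖_{L²} ‖∂_x u‖_{L²}. -/

import Mathlib

open MeasureTheory Real

noncomputable section

abbrev C2 := EuclideanSpace ℂ (Fin 2)

/-- The `L²` norm `‖u‖_{L²} = (∫ ‖u(x)‖² dx)^{1/2}`. -/
def L2Norm (u : ℝ → C2) : ℝ := Real.sqrt (∫ x : ℝ, ‖u x‖ ^ 2)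

/-- For `u ∈ H¹(ℝ,ℂ²)` and `δ > 0`, the Riemann sum over the lattice `δℤ` satisfies
`δ ∑_{x ∈ δℤ} ‖u(x)‖² ≤ ‖u‖²_{L²} + 2δ ‖u‖_{L²} ‖∂_x u‖_{L²}`. -/
theorem latticeSum_le (δ : ℝ) (hδ : 0 < δ) (u : ℝ → C2)
    (hu : ContDiff ℝ 1 u)
    (huL2 : Integrable (fun x => ‖u x‖ ^ 2))
    (hu'L2 : Integrable (fun x => ‖deriv u x‖ ^ 2)) :
    δ * ∑' n : ℤ, ‖u (δ * n)‖ ^ 2 ≤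
      (∫ x : ℝ, ‖u x‖ ^ 2) + 2 * δ * L2Norm u * L2Norm (deriv u) := by
  have hucont : Continuous u := hu.continuous
  have hu'cont : Continuous (deriv u) := hu.continuous_deriv le_rfl
  set F : ℝ → ℝ := fun t => ‖u t‖ ^ 2 with hFdef
  set g : ℝ → ℝ := fun t => 2 * (inner ℂ (u t) (deriv u t) : ℂ).re with hgdef
  -- derivative of F is g
  have hFderiv : ∀ t, HasDerivAt F (g t) t := by
    intro t
    have h1 : HasDerivAt u (deriv u t) t := (hu.differentiable one_ne_zero t).hasDerivAt
    have h2 := HasDerivAt.inner ℂ h1 h1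
    have h3 := (Complex.reCLM.hasFDerivAt.comp_hasDerivAt t h2)
    convert h3 using 1
    · rfl
    · rfl
    · ext s; simp [F, ← @inner_self_eq_norm_sq ℂ]
    · simp only [g, Complex.reCLM_apply, Complex.add_re]
      rw [← inner_conj_symm (deriv u t) (u t)]
      simp [Complex.conj_re]; rw [← inner_conj_symm (deriv u t) (u t), Complex.conj_re]; ring
  have hgcont : Continuous g := by
    have : Continuous fun t => (inner ℂ (u t) (deriv u t) : ℂ) :=
      Continuous.inner hucont hu'cont
    exact (continuous_const.mul (Complex.continuous_re.comp this))
  -- pointwise bound on |g|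
  have hgbound : ∀ t, |g t| ≤ 2 * (‖u t‖ * ‖deriv u t‖) := by
    intro t
    have h1 : |(inner ℂ (u t) (deriv u t) : ℂ).re| ≤ ‖(inner ℂ (u t) (deriv u t) : ℂ)‖ :=
      Complex.abs_re_le_norm _
    have h2 : ‖(inner ℂ (u t) (deriv u t) : ℂ)‖ ≤ ‖u t‖ * ‖deriv u t‖ :=
      norm_inner_le_norm _ _
    calc |g t| = 2 * |(inner ℂ (u t) (deriv u t) : ℂ).re| := by
          rw [hgdef]; rw [abs_mul]; norm_num
      _ ≤ 2 * (‖u t‖ * ‖deriv u t‖) := by nlinarith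
  have hprod_bound : ∀ t, 2 * (‖u t‖ * ‖deriv u t‖) ≤ ‖u t‖ ^ 2 + ‖deriv u t‖ ^ 2 := by
    intro t; nlinarith [sq_nonneg (‖u t‖ - ‖deriv u t‖)]
  -- integrability
  have hFint : Integrable F := huL2
  have hprodint : Integrable (fun t => 2 * (‖u t‖ * ‖deriv u t‖)) := by
    apply (huL2.add hu'L2).mono'
    · exact (continuous_const.mul (hucont.norm.mul hu'cont.norm)).aestronglyMeasurable
    · filter_upwards with t
      rw [Real.norm_of_nonneg (by positivity)]
      exact hprod_bound t
  have hgabsint : Integrable (fun t => |g t|) := by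
    apply hprodint.mono' hgcont.abs.aestronglyMeasurable
    filter_upwards with t
    rw [Real.norm_of_nonneg (abs_nonneg _)]
    exact hgbound t
  -- key per-interval estimate
  have key : ∀ a : ℝ, δ * F a ≤
      (∫ x in Set.Ioc a (a + δ), F x) + δ * ∫ x in Set.Ioc a (a + δ), |g x| := by
    intro a
    have hle : a ≤ a + δ := by linarith
    set Cg : ℝ := ∫ x in Set.Ioc a (a + δ), |g x| with hCg
    have hpt : ∀ x ∈ Set.Ioc a (a + δ), F a ≤ F x + Cg := by
      intro x hx
      have hax : a ≤ x := le_of_lt hx.1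
      have ftc : ∫ t in a..x, g t = F x - F a :=
        intervalIntegral.integral_eq_sub_of_hasDerivAt (fun t _ => hFderiv t)
          (hgcont.intervalIntegrable a x)
      have h1 : |∫ t in a..x, g t| ≤ ∫ t in a..x, |g t| :=
        intervalIntegral.abs_integral_le_integral_abs hax
      have h2 : (∫ t in a..x, |g t|) ≤ Cg := by
        rw [intervalIntegral.integral_of_le hax, hCg]
        apply setIntegral_mono_set hgabsint.integrableOn
        · filter_upwards with t using abs_nonneg _
        · exact HasSubset.Subset.eventuallyLE (Set.Ioc_subset_Ioc_right hx.2)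
      have := abs_le.mp (h1.trans h2)
      rw [ftc] at this
      linarith [this.2]
    have hconst : ∫ _x in Set.Ioc a (a + δ), (F a) = δ * F a := by
      rw [setIntegral_const]
      rw [Real.volume_real_Ioc_of_le hle, add_sub_cancel_left]
      simp
    calc δ * F a = ∫ _x in Set.Ioc a (a + δ), (F a) := hconst.symm
      _ ≤ ∫ x in Set.Ioc a (a + δ), (F x + Cg) := by
          apply setIntegral_mono_on
          · exact integrableOn_const (by rw [Real.volume_Ioc]; exact ENNReal.ofReal_ne_top)
          · exact (hFint.integrableOn).add (integrableOn_const (by rw [Real.volume_Ioc]; exact ENNReal.ofReal_ne_top))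
          · exact measurableSet_Ioc
          · exact hpt
      _ = (∫ x in Set.Ioc a (a + δ), F x) + δ * Cg := by
          rw [integral_add hFint.integrableOn (integrableOn_const (by rw [Real.volume_Ioc]; exact ENNReal.ofReal_ne_top))]
          rw [setIntegral_const, Real.volume_real_Ioc_of_le hle, add_sub_cancel_left]
          simp
  -- nonnegativity
  have hFnn : ∀ t, 0 ≤ F t := fun t => by positivity
  -- Cauchy-Schwarz: ∫ |g| ≤ 2 * L2Norm u * L2Norm (deriv u)
  have hCS : (∫ x, |g x|) ≤ 2 * L2Norm u * L2Norm (deriv u) := by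
    have hpq : (2:ℝ).HolderConjugate 2 := ⟨by norm_num, by norm_num, by norm_num⟩
    have h2 : (ENNReal.ofReal (2:ℝ)) = 2 := by norm_num
    have hmu : MemLp (fun x => ‖u x‖) (ENNReal.ofReal (2:ℝ)) volume := by
      rw [h2]
      exact (memLp_two_iff_integrable_sq hucont.norm.aestronglyMeasurable).mpr huL2
    have hmu' : MemLp (fun x => ‖deriv u x‖) (ENNReal.ofReal (2:ℝ)) volume := by
      rw [h2]
      exact (memLp_two_iff_integrable_sq hu'cont.norm.aestronglyMeasurable).mpr hu'L2
    have hH := integral_mul_le_Lp_mul_Lq_of_nonneg hpq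
      (Filter.Eventually.of_forall fun x => norm_nonneg (u x))
      (Filter.Eventually.of_forall fun x => norm_nonneg (deriv u x)) hmu hmu'
    have hrw : ∀ v : ℝ → C2, (∫ x, ‖v x‖ ^ (2:ℝ)) ^ ((1:ℝ)/2) = L2Norm v := by
      intro v
      rw [L2Norm, Real.sqrt_eq_rpow]
      congr 1
      apply integral_congr_ae
      filter_upwards with x
      rw [Real.rpow_two]
    rw [hrw u, hrw (deriv u)] at hH
    calc (∫ x, |g x|) ≤ ∫ x, 2 * (‖u x‖ * ‖deriv u x‖) :=
          integral_mono hgabsint hprodint hgbound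
      _ = 2 * ∫ x, ‖u x‖ * ‖deriv u x‖ := integral_const_mul 2 _
      _ ≤ 2 * (L2Norm u * L2Norm (deriv u)) := by
          apply mul_le_mul_of_nonneg_left _ (by norm_num)
          exact hH
      _ = 2 * L2Norm u * L2Norm (deriv u) := by ring
  set C : ℝ := (∫ x, F x) + δ * ∫ x, |g x| with hCdef
  -- finite sum bound
  have hsumδ : ∀ s : Finset ℤ, δ * ∑ n ∈ s, F (δ * n) ≤ C := by
    intro s
    set I : ℤ → Set ℝ := fun n => Set.Ioc (δ * n) (δ * n + δ) with hIdef
    have hdisj : (↑s : Set ℤ).Pairwise (Function.onFun Disjoint I) := by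
      intro m _ n _ hmn
      have key2 : ∀ p q : ℤ, p < q → Disjoint (I p) (I q) := by
        intro p q hpq
        rw [hIdef]
        rw [Set.Ioc_disjoint_Ioc]
        have : (p:ℝ) + 1 ≤ q := by exact_mod_cast hpq
        calc min (δ * p + δ) (δ * q + δ) ≤ δ * p + δ := min_le_left _ _
          _ ≤ δ * q := by nlinarith
          _ ≤ max (δ * p) (δ * q) := le_max_right _ _
      rcases lt_or_gt_of_ne hmn with h | h
      · exact key2 m n h
      · exact (key2 n m h).symm
    have hunion : ∀ (h : ℝ → ℝ), Integrable h → (∀ t, 0 ≤ h t) →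
        ∑ n ∈ s, (∫ x in I n, h x) ≤ ∫ x, h x := by
      intro h hint hnn
      rw [← integral_biUnion_finset s (fun i _ => measurableSet_Ioc) hdisj
        (fun i _ => hint.integrableOn)]
      exact setIntegral_le_integral hint (Filter.Eventually.of_forall hnn)
    calc δ * ∑ n ∈ s, F (δ * n) = ∑ n ∈ s, δ * F (δ * n) := Finset.mul_sum _ _ _
      _ ≤ ∑ n ∈ s, ((∫ x in I n, F x) + δ * ∫ x in I n, |g x|) :=
          Finset.sum_le_sum fun n _ => key (δ * n)
      _ = (∑ n ∈ s, ∫ x in I n, F x) + δ * ∑ n ∈ s, ∫ x in I n, |g x| := by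
          rw [Finset.sum_add_distrib, Finset.mul_sum]
      _ ≤ (∫ x, F x) + δ * ∫ x, |g x| := by
          have h1 := hunion F hFint hFnn
          have h2 := hunion (fun t => |g t|) hgabsint (fun t => abs_nonneg _)
          have := mul_le_mul_of_nonneg_left h2 hδ.le
          linarith
  have hsum' : ∀ s : Finset ℤ, ∑ n ∈ s, F (δ * n) ≤ C / δ := by
    intro s
    rw [le_div_iff₀ hδ, mul_comm]
    exact hsumδ s
  have hsummable : Summable (fun n : ℤ => F (δ * n)) :=
    summable_of_sum_le (fun n => hFnn _) hsum'
  have htsum : ∑' n : ℤ, F (δ * n) ≤ C / δ := Summable.tsum_le_of_sum_le hsummable hsum'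
  calc δ * ∑' n : ℤ, ‖u (δ * n)‖ ^ 2 ≤ δ * (C / δ) := by
        apply mul_le_mul_of_nonneg_left htsum hδ.le
    _ = C := by field_simp
    _ ≤ (∫ x : ℝ, ‖u x‖ ^ 2) + 2 * δ * L2Norm u * L2Norm (deriv u) := by
        rw [hCdef]
        have := mul_le_mul_of_nonneg_left hCS hδ.le
        have heq : (∫ x, F x) = ∫ x : ℝ, ‖u x‖ ^ 2 := rfl
        rw [heq]
        nlinarith
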